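/- Let X ⊆ ℝ^d and Y ⊆ ℝ^p be closed convex sets, and let f : X × Y → ℝ be continuously differentiable. Suppose that for each y ∈ Y the function x ↦ f(x, y) is μ-strongly convex (μ > 0), and that for each x ∈ X the map y ↦ ∇_x f(x, y) is L_{x,y}-Lipschitz continuous. Then the map x*(y) := argmin_{x ∈ X} f(x, y) is well-defined (the minimizer exists and is unique for each y ∈ Y) and is (L_{x,y}/μ)-Lipschitz continuous: ‖x*(y₁) − x*(y₂)‖ ≤ (L_{x,y}/μ)‖y₁ − y₂‖ for all y₁, y₂ ∈ Y. -/

import Mathlib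

open scoped NNReal
open scoped InnerProductSpace
open scoped Topology
open Set Filter

/-- First-order inequality for strongly convex functions. -/
lemma sc_firstorder {E : Type*} [NormedAddCommGroup E] [InnerProductSpace ℝ E]
    [CompleteSpace E]
    {s : Set E} {μ : ℝ} {g : E → ℝ} {G : E}
    (hsc : StrongConvexOn s μ g) {x y : E} (hx : x ∈ s) (hy : y ∈ s)
    (hG : HasGradientAt g G x) :
    g x + ⟪G, y - x⟫_ℝ + μ / 2 * ‖y - x‖ ^ 2 ≤ g y := by
  rcases eq_or_ne y x with rfl | hne
  · simp
  · set φ : ℝ → ℝ := fun t => g (x + t • (y - x)) with hφdef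
    have hline : HasDerivAt (fun t : ℝ => x + t • (y - x)) (y - x) 0 := by
      simpa using ((hasDerivAt_id (0 : ℝ)).smul_const (y - x)).const_add x
    have hFD : HasFDerivAt g (InnerProductSpace.toDual ℝ E G) x :=
      hasGradientAt_iff_hasFDerivAt.mp hG
    have hφ : HasDerivAt φ (⟪G, y - x⟫_ℝ) 0 := by
      have h0 : (fun t : ℝ => x + t • (y - x)) 0 = x := by simp
      have := (h0 ▸ hFD).comp_hasDerivAt 0 hline
      simp only [InnerProductSpace.toDual_apply_apply] at this
      exact this
    have hslope : Tendsto (slope φ 0) (𝓝[>] (0 : ℝ)) (𝓝 (⟪G, y - x⟫_ℝ)) :=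
      (hasDerivAt_iff_tendsto_slope.mp hφ).mono_left
        (nhdsWithin_mono 0 (fun t ht => ne_of_gt ht))
    set ψ : ℝ → ℝ := fun t => g y - g x - μ / 2 * (1 - t) * ‖x - y‖ ^ 2 with hψdef
    have hψ : Tendsto ψ (𝓝[>] (0 : ℝ)) (𝓝 (g y - g x - μ / 2 * ‖x - y‖ ^ 2)) := by
      have hc : ContinuousAt ψ 0 := by fun_prop
      have := hc.tendsto.mono_left (nhdsWithin_le_nhds (s := Ioi (0 : ℝ)))
      simpa [hψdef] using this
    have hev : ∀ᶠ t in 𝓝[>] (0 : ℝ), slope φ 0 t ≤ ψ t := by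
      filter_upwards [Ioc_mem_nhdsGT_of_mem (⟨le_refl (0 : ℝ), zero_lt_one⟩ : (0:ℝ) ∈ Ico (0:ℝ) 1)]
        with t ht
      have ht0 : 0 < t := ht.1
      have ht1 : t ≤ 1 := ht.2
      have hcomb : φ t = g ((1 - t) • x + t • y) := by
        have hx' : x + t • (y - x) = (1 - t) • x + t • y := by
          simp [smul_sub, sub_smul]; abel
        simp [hφdef, hx']
      have hkey := hsc.2 hx hy (sub_nonneg.mpr ht1) (le_of_lt ht0) (by ring)
      have hφt : φ t ≤ (1 - t) * g x + t * g y - (1 - t) * t * (μ / 2 * ‖x - y‖ ^ 2) := by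
        rw [hcomb]; simpa [smul_eq_mul] using hkey
      have hφ0 : φ 0 = g x := by simp [hφdef]
      have hmain : (φ t - φ 0) / (t - 0) ≤ ψ t := by
        rw [sub_zero, div_le_iff₀ ht0]
        calc φ t - φ 0 ≤ (1 - t) * g x + t * g y - (1 - t) * t * (μ / 2 * ‖x - y‖ ^ 2) - g x := by
              linarith
          _ = ψ t * t := by rw [hψdef]; ring
      simpa [slope_def_field] using hmain
    have hfin := le_of_tendsto_of_tendsto hslope hψ hev
    have hns : ‖x - y‖ = ‖y - x‖ := norm_sub_rev x y
    rw [hns] at hfin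
    linarith

/-- Variational inequality at a minimizer over a convex set. -/
lemma var_ineq {E : Type*} [NormedAddCommGroup E] [InnerProductSpace ℝ E]
    [CompleteSpace E]
    {s : Set E} {g : E → ℝ} {G : E} {x y : E}
    (hconv : Convex ℝ s) (hmin : IsMinOn g s x) (hx : x ∈ s) (hy : y ∈ s)
    (hG : HasGradientAt g G x) :
    0 ≤ ⟪G, y - x⟫_ℝ := by
  have hloc : IsLocalMinOn g s x := hmin.filter_mono inf_le_right
  have hcone : y - x ∈ posTangentConeAt s x :=
    sub_mem_posTangentConeAt_of_segment_subset (hconv.segment_subset hx hy)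
  have hFD : HasFDerivAt g (InnerProductSpace.toDual ℝ E G) x :=
    hasGradientAt_iff_hasFDerivAt.mp hG
  have := hloc.hasFDerivWithinAt_nonneg hFD.hasFDerivWithinAt hcone
  simpa [InnerProductSpace.toDual_apply_apply] using this

/-- Existence and uniqueness of the minimizer of a strongly convex function
on a nonempty closed convex set in a finite-dimensional inner product space. -/
lemma exists_unique_min {E : Type*} [NormedAddCommGroup E] [InnerProductSpace ℝ E]
    [FiniteDimensional ℝ E]
    {s : Set E} {μ : ℝ} {g : E → ℝ} {G : E → E}
    (hμ : 0 < μ) (hsc : StrongConvexOn s μ g) (hgc : Continuous g)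
    (hcl : IsClosed s) (hconv : Convex ℝ s) (hne : s.Nonempty)
    (hG : ∀ x, HasGradientAt g (G x) x) :
    ∃! x, x ∈ s ∧ IsMinOn g s x := by
  obtain ⟨x₀, hx₀⟩ := hne
  set C : ℝ := ‖G x₀‖ with hCdef
  set R : ℝ := 2 * C / μ + 1 with hRdef
  have hC0 : 0 ≤ C := norm_nonneg _
  have hR0 : 0 < R := by positivity
  have hbound : ∀ x ∈ s, R ≤ ‖x - x₀‖ → g x₀ ≤ g x := by
    intro x hx hRx
    have h1 := sc_firstorder hsc hx₀ hx (hG x₀)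
    have h2 : -(C * ‖x - x₀‖) ≤ ⟪G x₀, x - x₀⟫_ℝ := by
      have := abs_real_inner_le_norm (G x₀) (x - x₀)
      rw [abs_le] at this
      exact this.1
    have hr0 : (0:ℝ) ≤ ‖x - x₀‖ := norm_nonneg _
    have h3 : 2 * C + μ ≤ μ * ‖x - x₀‖ := by
      have h4 := mul_le_mul_of_nonneg_left hRx (le_of_lt hμ)
      have hμR : μ * R = 2 * C + μ := by
        rw [hRdef]; field_simp
      linarith
    have h5 : C * ‖x - x₀‖ ≤ μ / 2 * ‖x - x₀‖ ^ 2 := by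
      nlinarith [mul_le_mul_of_nonneg_right h3 hr0]
    linarith
  set K := s ∩ Metric.closedBall x₀ R with hKdef
  have hKcl : IsClosed K := hcl.inter Metric.isClosed_closedBall
  have hKb : Bornology.IsBounded K :=
    (Metric.isBounded_closedBall (x := x₀) (r := R)).subset inter_subset_right
  have hKcpt : IsCompact K := Metric.isCompact_of_isClosed_isBounded hKcl hKb
  have hx₀K : x₀ ∈ K := ⟨hx₀, by simp [le_of_lt hR0]⟩
  obtain ⟨xm, hxmK, hxmmin⟩ := hKcpt.exists_isMinOn ⟨x₀, hx₀K⟩ hgc.continuousOn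
  have hxms : xm ∈ s := hxmK.1
  have hmins : IsMinOn g s xm := by
    rw [isMinOn_iff]
    intro x hx
    by_cases hcase : ‖x - x₀‖ ≤ R
    · exact isMinOn_iff.mp hxmmin x ⟨hx, by simpa [Metric.mem_closedBall, dist_eq_norm] using hcase⟩
    · have h1 := hbound x hx (le_of_not_ge hcase)
      have h2 := isMinOn_iff.mp hxmmin x₀ hx₀K
      linarith
  refine ⟨xm, ⟨hxms, hmins⟩, ?_⟩
  rintro x' ⟨hx's, hx'min⟩
  by_contra hne'
  have hstrict := hsc.strictConvexOn hμ
  have heq : g x' = g xm :=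
    le_antisymm (isMinOn_iff.mp hx'min xm hxms) (isMinOn_iff.mp hmins x' hx's)
  have hmid := hstrict.2 hx's hxms hne' (by norm_num : (0:ℝ) < 1/2) (by norm_num : (0:ℝ) < 1/2)
    (by norm_num)
  have hmem : (1/2 : ℝ) • x' + (1/2 : ℝ) • xm ∈ s :=
    hconv hx's hxms (by norm_num) (by norm_num) (by norm_num)
  have hle : g xm ≤ g ((1/2 : ℝ) • x' + (1/2 : ℝ) • xm) := isMinOn_iff.mp hmins _ hmem
  simp only [smul_eq_mul] at hmid
  rw [heq] at hmid
  linarith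

theorem stmt16 {d p : ℕ}
    (X : Set (EuclideanSpace ℝ (Fin d))) (Y : Set (EuclideanSpace ℝ (Fin p)))
    (hXc : IsClosed X) (hXconv : Convex ℝ X) (hXne : X.Nonempty)
    (hYc : IsClosed Y) (hYconv : Convex ℝ Y)
    (f : EuclideanSpace ℝ (Fin d) × EuclideanSpace ℝ (Fin p) → ℝ)
    (hf : ContDiff ℝ 1 f)
    (μ : ℝ) (hμ : 0 < μ)
    (hstrong : ∀ y ∈ Y, StrongConvexOn X μ (fun x => f (x, y)))
    (gx : EuclideanSpace ℝ (Fin d) → EuclideanSpace ℝ (Fin p) → EuclideanSpace ℝ (Fin d))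
    (hgx : ∀ x y, HasGradientAt (fun x' => f (x', y)) (gx x y) x)
    (Lxy : ℝ≥0)
    (hLip : ∀ x ∈ X, LipschitzOnWith Lxy (fun y => gx x y) Y) :
    (∀ y ∈ Y, ∃! x, x ∈ X ∧ IsMinOn (fun x' => f (x', y)) X x) ∧
    (∀ y₁ ∈ Y, ∀ y₂ ∈ Y, ∀ x₁ x₂ : EuclideanSpace ℝ (Fin d),
      x₁ ∈ X → IsMinOn (fun x' => f (x', y₁)) X x₁ →
      x₂ ∈ X → IsMinOn (fun x' => f (x', y₂)) X x₂ →
      ‖x₁ - x₂‖ ≤ (Lxy : ℝ) / μ * ‖y₁ - y₂‖) := by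
  constructor
  · intro y hy
    exact exists_unique_min hμ (hstrong y hy)
      (hf.continuous.comp (continuous_id.prodMk continuous_const))
      hXc hXconv hXne (fun x => hgx x y)
  · intro y₁ hy₁ y₂ hy₂ x₁ x₂ hx₁ hmin₁ hx₂ hmin₂
    rcases eq_or_ne x₁ x₂ with rfl | hne
    · simp only [sub_self, norm_zero]
      positivity
    · have hΔ : 0 < ‖x₁ - x₂‖ := by
        rw [norm_pos_iff]
        exact sub_ne_zero.mpr hne
      have hv1 : 0 ≤ ⟪gx x₁ y₁, x₂ - x₁⟫_ℝ :=
        var_ineq hXconv hmin₁ hx₁ hx₂ (hgx x₁ y₁)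
      have hv2 : 0 ≤ ⟪gx x₂ y₂, x₁ - x₂⟫_ℝ :=
        var_ineq hXconv hmin₂ hx₂ hx₁ (hgx x₂ y₂)
      have hA := sc_firstorder (hstrong y₁ hy₁) hx₁ hx₂ (hgx x₁ y₁)
      have hB := sc_firstorder (hstrong y₁ hy₁) hx₂ hx₁ (hgx x₂ y₁)
      have hnorm : ‖x₂ - x₁‖ = ‖x₁ - x₂‖ := norm_sub_rev _ _
      rw [hnorm] at hA
      have hmono : μ * ‖x₁ - x₂‖ ^ 2 ≤ ⟪gx x₂ y₂ - gx x₂ y₁, x₁ - x₂⟫_ℝ := by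
        rw [inner_sub_left]
        linarith
      have hcs : ⟪gx x₂ y₂ - gx x₂ y₁, x₁ - x₂⟫_ℝ ≤ ‖gx x₂ y₂ - gx x₂ y₁‖ * ‖x₁ - x₂‖ :=
        real_inner_le_norm _ _
      have hlip : ‖gx x₂ y₂ - gx x₂ y₁‖ ≤ (Lxy : ℝ) * ‖y₁ - y₂‖ := by
        have := (hLip x₂ hx₂).dist_le_mul y₂ hy₂ y₁ hy₁
        rw [dist_eq_norm, dist_eq_norm] at this
        rwa [norm_sub_rev y₁ y₂]
      have hkey : μ * ‖x₁ - x₂‖ ^ 2 ≤ (Lxy : ℝ) * ‖y₁ - y₂‖ * ‖x₁ - x₂‖ := by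
        calc μ * ‖x₁ - x₂‖ ^ 2 ≤ ⟪gx x₂ y₂ - gx x₂ y₁, x₁ - x₂⟫_ℝ := hmono
          _ ≤ ‖gx x₂ y₂ - gx x₂ y₁‖ * ‖x₁ - x₂‖ := hcs
          _ ≤ (Lxy : ℝ) * ‖y₁ - y₂‖ * ‖x₁ - x₂‖ :=
              mul_le_mul_of_nonneg_right hlip (norm_nonneg _)
      rw [div_mul_eq_mul_div, le_div_iff₀ hμ]
      nlinarith [hkey, hΔ]
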